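/- For every odd natural number n, the complex Clifford algebra ℂCl(n) admits two inequivalent irreducible representations: there exist two simple ℂCl(n)-modules that are not isomorphic as ℂCl(n)-modules. -/

import Mathlib

/-- The quadratic form `Qℂ_n` on `ℂ^n`: `Qℂ_n(x) = ∑_{i<n} x_i²`. -/
noncomputable def Qc (n : ℕ) : QuadraticForm ℂ (Fin n → ℂ) :=
  QuadraticMap.weightedSumSquares ℂ (fun _ : Fin n => (1 : ℂ))

/-- The complex Clifford algebra `ℂCl(n)`. -/
noncomputable abbrev ComplexCliffordAlgebra (n : ℕ) := CliffordAlgebra (Qc n)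

namespace CCl
open CliffordAlgebra

variable (n : ℕ)

noncomputable def e (i : Fin n) : ComplexCliffordAlgebra n :=
  ι (Qc n) (Pi.single i 1)

lemma Qc_apply (v : Fin n → ℂ) : Qc n v = ∑ i, v i * v i := by
  simp [Qc, QuadraticMap.weightedSumSquares_apply, smul_eq_mul]

lemma e_sq (i : Fin n) : e n i * e n i = 1 := by
  rw [e, ι_sq_scalar, Qc_apply]
  have h : (∑ k : Fin n, (Pi.single i 1 : Fin n → ℂ) k * (Pi.single i 1 : Fin n → ℂ) k) = 1 := by
    simp [Pi.single_apply]
  rw [h, map_one]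

lemma ortho {i j : Fin n} (h : i ≠ j) :
    (Qc n).IsOrtho (Pi.single i 1) (Pi.single j 1) := by
  rw [QuadraticMap.isOrtho_def]
  simp only [Qc_apply, Pi.add_apply, Pi.single_apply]
  rw [← Finset.sum_add_distrib]
  apply Finset.sum_congr rfl
  intro k _
  by_cases hk : k = i <;> by_cases hk' : k = j<;> simp_all

lemma e_anticomm {i j : Fin n} (h : i ≠ j) : e n i * e n j = -(e n j * e n i) := by
  have h2 := CliffordAlgebra.ι_mul_ι_add_swap_of_isOrtho (ortho n h)
  rw [e, e]
  rw [← e, ← e] at h2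
  exact eq_neg_of_add_eq_zero_left h2


/-- signed commutation of a generator past a product of other generators -/
lemma e_mul_prod (j : Fin n) : ∀ (l : List (Fin n)), j ∉ l →
    e n j * (l.map (e n)).prod = ((-1 : ℂ) ^ l.length) • ((l.map (e n)).prod * e n j)
  | [], _ => by simp
  | a :: l, hj => by
    have ha : a ≠ j := fun h => hj (h ▸ List.mem_cons_self (a := a) (l := l))
    have hl : j ∉ l := fun h => hj (List.mem_cons_of_mem _ h)
    have ih := e_mul_prod j l hl
    simp only [List.map_cons, List.prod_cons, List.length_cons]
    calc e n j * (e n a * (l.map (e n)).prod)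
        = (e n j * e n a) * (l.map (e n)).prod := by rw [mul_assoc]
      _ = (-(e n a * e n j)) * (l.map (e n)).prod := by rw [e_anticomm n (Ne.symm ha)]
      _ = -(e n a * (e n j * (l.map (e n)).prod)) := by rw [neg_mul, mul_assoc]
      _ = -(e n a * (((-1 : ℂ) ^ l.length) • ((l.map (e n)).prod * e n j))) := by rw [ih]
      _ = ((-1 : ℂ) ^ (l.length + 1)) • (e n a * (l.map (e n)).prod * e n j) := by
          rw [mul_smul_comm, pow_succ, mul_smul, neg_one_smul, smul_neg]
          simp only [mul_assoc]

/-- flipped version -/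
lemma prod_mul_e (j : Fin n) (l : List (Fin n)) (hj : j ∉ l) :
    (l.map (e n)).prod * e n j = ((-1 : ℂ) ^ l.length) • (e n j * (l.map (e n)).prod) := by
  have h := e_mul_prod n j l hj
  have hc : ((-1 : ℂ) ^ l.length) * ((-1 : ℂ) ^ l.length) = 1 := by
    rw [← pow_add]; exact Even.neg_one_pow ⟨l.length, rfl⟩
  calc (l.map (e n)).prod * e n j
      = (1:ℂ) • ((l.map (e n)).prod * e n j) := (one_smul _ _).symm
    _ = ((-1 : ℂ) ^ l.length) • (((-1 : ℂ) ^ l.length) • ((l.map (e n)).prod * e n j)) := by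
        rw [smul_smul, hc]
    _ = ((-1 : ℂ) ^ l.length) • (e n j * (l.map (e n)).prod) := by rw [← h]

/-- squares of products of distinct generators are nonzero scalars -/
lemma prod_sq : ∀ (l : List (Fin n)), l.Nodup →
    ∃ c : ℂ, c ≠ 0 ∧ (l.map (e n)).prod * (l.map (e n)).prod = algebraMap ℂ _ c
  | [], _ => ⟨1, one_ne_zero, by simp⟩
  | a :: l, hnd => by
    have ha : a ∉ l := (List.nodup_cons.mp hnd).1
    obtain ⟨c, hc0, hc⟩ := prod_sq l (List.nodup_cons.mp hnd).2
    refine ⟨((-1 : ℂ) ^ l.length) * c, by simp [hc0], ?_⟩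
    simp only [List.map_cons, List.prod_cons]
    calc (e n a * (l.map (e n)).prod) * (e n a * (l.map (e n)).prod)
        = e n a * (((l.map (e n)).prod * e n a) * (l.map (e n)).prod) := by
          simp only [mul_assoc]
      _ = e n a * ((((-1 : ℂ) ^ l.length) • (e n a * (l.map (e n)).prod)) * (l.map (e n)).prod) := by
          rw [prod_mul_e n a l ha]
      _ = ((-1 : ℂ) ^ l.length) • ((e n a * e n a) * ((l.map (e n)).prod * (l.map (e n)).prod)) := by
          rw [smul_mul_assoc, mul_smul_comm]
          congr 1
          simp only [mul_assoc]
      _ = algebraMap ℂ _ (((-1 : ℂ) ^ l.length) * c) := by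
          rw [e_sq, one_mul, hc, map_mul, Algebra.smul_def]

/-- the volume element -/
noncomputable def ω : ComplexCliffordAlgebra n := ((List.finRange n).map (e n)).prod

lemma omega_sq : ∃ c : ℂ, c ≠ 0 ∧ ω n * ω n = algebraMap ℂ _ c :=
  prod_sq n _ (List.nodup_finRange n)

lemma involute_prod : ∀ l : List (Fin n),
    involute ((l.map (e n)).prod) = ((-1 : ℂ) ^ l.length) • (l.map (e n)).prod
  | [] => by simp
  | a :: l => by
    simp only [List.map_cons, List.prod_cons, map_mul, List.length_cons]
    rw [involute_prod l, show involute (e n a) = -(e n a) from involute_ι _,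
      mul_smul_comm, neg_mul, pow_succ, mul_smul, neg_one_smul, smul_neg]

lemma involute_omega (hn : Odd n) : involute (ω n) = -(ω n) := by
  rw [ω, involute_prod, List.length_finRange, Odd.neg_one_pow hn, neg_one_smul]

lemma e_comm_omega (hn : Odd n) (j : Fin n) : e n j * ω n = ω n * e n j := by
  obtain ⟨s, t, heq⟩ := List.append_of_mem (List.mem_finRange j)
  have hnd : (s ++ j :: t).Nodup := heq ▸ List.nodup_finRange n
  have hjs : j ∉ s := by
    intro h
    exact (List.disjoint_of_nodup_append hnd) h (List.mem_cons_self (a := j) (l := t))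
  have hjt : j ∉ t := by
    have := (List.nodup_append.mp hnd).2.1
    exact (List.nodup_cons.mp this).1
  have hlen : s.length + t.length + 1 = n := by
    have := congrArg List.length heq
    simp [List.length_append] at this
    omega
  have hsgn : ((-1 : ℂ) ^ s.length) = ((-1 : ℂ) ^ t.length) := by
    obtain ⟨k, hk⟩ := hn
    rcases Nat.even_or_odd s.length with hh | hh
    · have : Even t.length := by rcases hh with ⟨u, hu⟩; refine ⟨k - u, by omega⟩
      rw [hh.neg_one_pow, this.neg_one_pow]
    · have : Odd t.length := by rcases hh with ⟨u, hu⟩; refine ⟨k - u - 1, by omega⟩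
      rw [hh.neg_one_pow, this.neg_one_pow]
  have hω : ω n = (s.map (e n)).prod * (e n j * (t.map (e n)).prod) := by
    rw [ω, heq]; simp [List.prod_append]
  rw [hω]
  calc e n j * ((s.map (e n)).prod * (e n j * (t.map (e n)).prod))
      = (e n j * (s.map (e n)).prod) * (e n j * (t.map (e n)).prod) := by
        simp only [mul_assoc]
    _ = (((-1 : ℂ) ^ s.length) • ((s.map (e n)).prod * e n j)) * (e n j * (t.map (e n)).prod) := by
        rw [e_mul_prod n j s hjs]
    _ = ((-1 : ℂ) ^ s.length) • ((s.map (e n)).prod * ((e n j * e n j) * (t.map (e n)).prod)) := by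
        rw [smul_mul_assoc]; congr 1; simp only [mul_assoc]
    _ = ((-1 : ℂ) ^ s.length) • ((s.map (e n)).prod * (t.map (e n)).prod) := by
        rw [e_sq, one_mul]
    _ = ((-1 : ℂ) ^ t.length) • ((s.map (e n)).prod * (t.map (e n)).prod) := by rw [hsgn]
    _ = (s.map (e n)).prod * (((-1 : ℂ) ^ t.length) • ((t.map (e n)).prod * e n j)) * e n j := by
        rw [mul_smul_comm, smul_mul_assoc]
        congr 1
        simp only [mul_assoc]
        rw [e_sq, mul_one]
    _ = (s.map (e n)).prod * (e n j * (t.map (e n)).prod) * e n j := by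
        rw [← e_mul_prod n j t hjt]

lemma omega_central (hn : Odd n) (x : ComplexCliffordAlgebra n) : ω n * x = x * ω n := by
  induction x using CliffordAlgebra.induction with
  | algebraMap r => rw [Algebra.commutes]
  | ι v =>
    have hv0 : v = ∑ i, v i • (Pi.single i 1 : Fin n → ℂ) := by
      rw [show (∑ i, v i • (Pi.single i 1 : Fin n → ℂ)) = ∑ i, Pi.single i (v i) from ?_,
        Finset.univ_sum_single]
      refine Finset.sum_congr rfl fun i _ => ?_
      rw [← Pi.single_smul, smul_eq_mul, mul_one]
    have hv : (ι (Qc n)) v = ∑ i, v i • e n i := by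
      conv_lhs => rw [hv0]
      rw [map_sum]
      refine Finset.sum_congr rfl fun i _ => ?_
      rw [map_smul, e]
    rw [hv, Finset.mul_sum, Finset.sum_mul]
    refine Finset.sum_congr rfl fun i _ => ?_
    rw [mul_smul_comm, smul_mul_assoc, e_comm_omega n hn i]
  | mul x y hx hy => rw [← mul_assoc, hx, mul_assoc, hy, mul_assoc]
  | add x y hx hy => rw [mul_add, add_mul, hx, hy]

end CCl
section Twist

variable {R : Type*} [Ring R] (σ : R ≃+* R) (M : Type*) [AddCommGroup M] [Module R M]

/-- Type synonym for `M` with the action twisted by `σ`. -/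
@[nolint unusedArguments]
def Tw (_ : R ≃+* R) (M : Type*) := M

/-- the identity, as a map `M → Tw σ M` -/
def toTw : M → Tw σ M := id
/-- the identity, as a map `Tw σ M → M` -/
def ofTw : Tw σ M → M := id

instance : AddCommGroup (Tw σ M) := inferInstanceAs (AddCommGroup M)
instance : Module R (Tw σ M) := Module.compHom M σ.toRingHom

variable {σ M}

lemma tw_smul (r : R) (m : Tw σ M) : ofTw σ M (r • m) = σ r • ofTw σ M m := rfl

lemma ofTw_add (m m' : Tw σ M) : ofTw σ M (m + m') = ofTw σ M m + ofTw σ M m' := rfl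

variable (σ M)

/-- submodules of the twisted module correspond to submodules of `M` -/
def twOrderIso : Submodule R (Tw σ M) ≃o Submodule R M where
  toFun p :=
    { carrier := ofTw σ M '' p.carrier
      add_mem' := by
        rintro a b ⟨x, hx, rfl⟩ ⟨y, hy, rfl⟩
        exact ⟨x + y, p.add_mem hx hy, rfl⟩
      zero_mem' := ⟨0, p.zero_mem, rfl⟩
      smul_mem' := by
        rintro r a ⟨x, hx, rfl⟩
        refine ⟨σ.symm r • x, p.smul_mem (σ.symm r) hx, ?_⟩
        rw [tw_smul, σ.apply_symm_apply] }
  invFun q :=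
    { carrier := toTw σ M '' q.carrier
      add_mem' := by
        rintro a b ⟨x, hx, rfl⟩ ⟨y, hy, rfl⟩
        exact ⟨x + y, q.add_mem hx hy, rfl⟩
      zero_mem' := ⟨0, q.zero_mem, rfl⟩
      smul_mem' := by
        rintro r a ⟨x, hx, rfl⟩
        exact ⟨σ r • x, q.smul_mem (σ r) hx, rfl⟩ }
  left_inv p := by
    ext x
    simp [toTw, ofTw]
    constructor
    · rintro ⟨_, ⟨y, hy, rfl⟩, rfl⟩; exact hy
    · intro hx; exact ⟨x, ⟨x, hx, rfl⟩, rfl⟩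
  right_inv q := by
    ext x
    simp [toTw, ofTw]
    constructor
    · rintro ⟨_, ⟨y, hy, rfl⟩, rfl⟩; exact hy
    · intro hx; exact ⟨x, ⟨x, hx, rfl⟩, rfl⟩
  map_rel_iff' := by
    intro p q
    constructor
    · intro h x hx
      have : ofTw σ M x ∈ ofTw σ M '' q.carrier := h ⟨x, hx, rfl⟩
      obtain ⟨y, hy, hxy⟩ := this
      exact show x ∈ q from (show y = x from hxy) ▸ hy
    · rintro h a ⟨x, hx, rfl⟩
      exact ⟨x, h hx, rfl⟩

lemma tw_isSimpleModule [IsSimpleModule R M] : IsSimpleModule R (Tw σ M) :=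
  { toIsSimpleOrder := (twOrderIso σ M).isSimpleOrder }

end Twist

set_option maxHeartbeats 2000000 in
/-- For odd `n`, the complex Clifford algebra `ℂCl(n)` admits two inequivalent irreducible
representations: there exist two simple `ℂCl(n)`-modules which are not isomorphic. -/
theorem complex_clifford_two_simple_modules (n : ℕ) (hn : Odd n) :
    ∃ M N : ModuleCat (ComplexCliffordAlgebra n),
      IsSimpleModule (ComplexCliffordAlgebra n) M ∧
      IsSimpleModule (ComplexCliffordAlgebra n) N ∧
      IsEmpty (M ≃ₗ[ComplexCliffordAlgebra n] N) := by
  classical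
  set R := ComplexCliffordAlgebra n with hR
  -- a simple module
  obtain ⟨I, hI⟩ := Ideal.exists_maximal R
  set M0 := R ⧸ I with hM0def
  have hM0 : IsSimpleModule R M0 :=
    isSimpleModule_iff_isCoatom.mpr (Ideal.isMaximal_def.mp hI)
  -- the involution as ring equiv
  set σ : R ≃+* R := (CliffordAlgebra.involuteEquiv (Q := Qc n)).toRingEquiv with hσ
  have hσω : σ (CCl.ω n) = -(CCl.ω n) := CCl.involute_omega n hn
  have hσalg : ∀ c : ℂ, σ (algebraMap ℂ R c) = algebraMap ℂ R c := fun c =>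
    CliffordAlgebra.involute.commutes c
  set N0 := Tw σ M0 with hN0def
  have hN0 : IsSimpleModule R N0 := tw_isSimpleModule σ M0
  have hM0' : IsSimpleModule R (ULift M0) := IsSimpleModule.congr ULift.moduleEquiv
  have hN0' : IsSimpleModule R (ULift N0) := IsSimpleModule.congr ULift.moduleEquiv
  refine ⟨ModuleCat.of R (ULift M0), ModuleCat.of R (ULift N0), hM0', hN0', ⟨fun f0 => ?_⟩⟩
  have f : M0 ≃ₗ[R] N0 :=
    (ULift.moduleEquiv.symm.trans ((f0 : ULift M0 ≃ₗ[R] ULift N0).trans ULift.moduleEquiv))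
  -- ω acts on M0 by a nonzero scalar t
  obtain ⟨c, hc0, hc⟩ := CCl.omega_sq n
  obtain ⟨s, hs⟩ := IsAlgClosed.exists_pow_nat_eq c (n := 2) two_pos
  have hs0 : s ≠ 0 := by
    rintro rfl
    rw [zero_pow (by norm_num)] at hs
    exact hc0 hs.symm
  letI : DivisionRing (Module.End R M0) := Module.End.instDivisionRing
  set φ : Module.End R M0 :=
    { toFun := fun m => CCl.ω n • m
      map_add' := fun m m' => smul_add _ _ _
      map_smul' := fun r m => by
        simp only [RingHom.id_apply]
        rw [smul_smul, smul_smul, CCl.omega_central n hn r] } with hφ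
  set ψ : Module.End R M0 :=
    { toFun := fun m => algebraMap ℂ R s • m
      map_add' := fun m m' => smul_add _ _ _
      map_smul' := fun r m => by
        simp only [RingHom.id_apply]
        rw [smul_smul, smul_smul, Algebra.commutes] } with hψ
  have key : (φ - ψ) * (φ + ψ) = 0 := by
    refine LinearMap.ext fun m => ?_
    simp only [Module.End.mul_apply, LinearMap.sub_apply, LinearMap.add_apply,
      LinearMap.zero_apply, hφ, hψ, LinearMap.coe_mk, AddHom.coe_mk, map_add, smul_add]
    rw [smul_smul, smul_smul, smul_smul, smul_smul, hc, Algebra.commutes (A := R) s (CCl.ω n),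
      ← map_mul, ← pow_two, hs]
    abel
  have hωt : ∃ t : ℂ, t ≠ 0 ∧ ∀ m : M0, CCl.ω n • m = algebraMap ℂ R t • m := by
    rcases mul_eq_zero.mp key with h | h
    · refine ⟨s, hs0, fun m => ?_⟩
      have h2 := DFunLike.congr_fun (sub_eq_zero.mp h) m
      simpa [hφ, hψ] using h2
    · refine ⟨-s, neg_ne_zero.mpr hs0, fun m => ?_⟩
      have h2 := DFunLike.congr_fun (eq_neg_of_add_eq_zero_left h) m
      rw [map_neg, neg_smul]
      simpa [hφ, hψ, LinearMap.neg_apply] using h2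
  obtain ⟨t, ht0, hωM⟩ := hωt
  -- now derive contradiction from f
  have hzero : ∀ m : M0, ofTw σ M0 (f m) = 0 := by
    intro m
    have h1 : f (CCl.ω n • m) = CCl.ω n • f m := f.map_smul _ _
    have h2 : ofTw σ M0 (CCl.ω n • f m) = σ (CCl.ω n) • ofTw σ M0 (f m) := tw_smul _ _
    have h3 : f (CCl.ω n • m) = f (algebraMap ℂ R t • m) := by rw [hωM m]
    have h4 : f (algebraMap ℂ R t • m) = algebraMap ℂ R t • f m := f.map_smul _ _
    have h5 : ofTw σ M0 (algebraMap ℂ R t • f m) = algebraMap ℂ R t • ofTw σ M0 (f m) := by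
      rw [tw_smul, hσalg]
    set x := ofTw σ M0 (f m) with hx
    have h6 : algebraMap ℂ R t • x = -(algebraMap ℂ R t • x) := by
      calc algebraMap ℂ R t • x
          = ofTw σ M0 (algebraMap ℂ R t • f m) := h5.symm
        _ = ofTw σ M0 (f (CCl.ω n • m)) := by rw [← h4, ← h3]
        _ = ofTw σ M0 (CCl.ω n • f m) := by rw [h1]
        _ = σ (CCl.ω n) • x := h2
        _ = -(CCl.ω n • x) := by rw [hσω, neg_smul]
        _ = -(algebraMap ℂ R t • x) := by rw [hωM]
    have h2t0 : (2 * t : ℂ) ≠ 0 := mul_ne_zero two_ne_zero ht0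
    have h7 : algebraMap ℂ R (2 * t) • x = 0 := by
      have e1 : algebraMap ℂ R (2 * t) • x = algebraMap ℂ R t • x + algebraMap ℂ R t • x := by
        rw [two_mul, map_add, add_smul]
      rw [e1]
      nth_rewrite 2 [h6]
      exact add_neg_cancel _
    have h8 : x = 0 := by
      have e2 : (algebraMap ℂ R (2 * t)⁻¹ * algebraMap ℂ R (2 * t)) • x = x := by
        rw [← map_mul, inv_mul_cancel₀ h2t0, map_one, one_smul]
      rw [mul_smul, h7, smul_zero] at e2
      exact e2.symm
    exact h8
  -- contradiction with injectivity
  have : Nontrivial M0 := IsSimpleModule.nontrivial R M0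
  obtain ⟨m, hm⟩ := exists_ne (0 : M0)
  exact hm (f.map_eq_zero_iff.mp (hzero m))
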